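/- arXiv:1503.01727 — 2 statements merged into one kernel-verified Lean document; each statement's English description precedes it below -/
import Mathlib

section
/- If λ_1, …, λ_P are strictly positive reals satisfying 2 max_k λ_k + Σ_j λ_j < 2, then every eigenvalue of Φ = diag((1−λ_k)^2 + λ_k^2) + λ λ^T is strictly less than 1, and hence the iteration ν[n+1] = Φ ν[n] + J λ converges for any J and any initial ν[0]. -/
open Matrix Finset Filter Topology

lemma stmt_11_aux {P : ℕ} (l : Fin P → ℝ) (hl : ∀ k, 0 < l k)
    (hstab : ∀ k, 2 * l k + ∑ j, l j < 2) :
    ∃ K0 : ℝ, 0 ≤ K0 ∧ K0 < 1 ∧ ∀ w : Fin P → ℝ,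
      ‖(Matrix.diagonal (fun k => (1 - l k) ^ 2 + (l k) ^ 2)
          + Matrix.vecMulVec l l).mulVec w‖ ≤ K0 * ‖w‖ := by
  set Φ := Matrix.diagonal (fun k => (1 - l k) ^ 2 + (l k) ^ 2) + Matrix.vecMulVec l l with hΦ
  have hentry : ∀ k j, Φ k j =
      (if k = j then (1 - l k) ^ 2 + (l k) ^ 2 else 0) + l k * l j := by
    intro k j
    simp [hΦ, Matrix.add_apply, Matrix.diagonal_apply, Matrix.vecMulVec_apply]
  have hnn : ∀ k j, 0 ≤ Φ k j := by
    intro k j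
    rw [hentry]
    have := (hl k).le
    have := (hl j).le
    split <;> nlinarith [sq_nonneg (1 - l k), sq_nonneg (l k)]
  have hrow : ∀ k, ∑ j, Φ k j < 1 := by
    intro k
    have : ∑ j, Φ k j = ((1 - l k) ^ 2 + (l k) ^ 2) + l k * ∑ j, l j := by
      simp only [hentry]
      rw [Finset.sum_add_distrib, Finset.sum_ite_eq Finset.univ k
        (fun _ => (1 - l k) ^ 2 + (l k) ^ 2), Finset.mul_sum]
      simp
    rw [this]
    nlinarith [hl k, hstab k]
  rcases isEmpty_or_nonempty (Fin P) with hP | hP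
  · refine ⟨0, le_refl _, one_pos, fun w => ?_⟩
    have : Φ.mulVec w = 0 := Subsingleton.elim _ _
    simp [this]
  · set K0 := Finset.univ.sup' (Finset.univ_nonempty) (fun k => ∑ j, Φ k j) with hK0
    have hle : ∀ k, ∑ j, Φ k j ≤ K0 := fun k =>
      Finset.le_sup' (fun k => ∑ j, Φ k j) (Finset.mem_univ k)
    have hK0nn : 0 ≤ K0 := by
      obtain ⟨k⟩ := hP
      exact le_trans (Finset.sum_nonneg fun j _ => hnn k j) (hle k)
    have hK0lt : K0 < 1 := by
      rw [hK0, Finset.sup'_lt_iff]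
      exact fun k _ => hrow k
    refine ⟨K0, hK0nn, hK0lt, fun w => ?_⟩
    have hwnn : 0 ≤ K0 * ‖w‖ := mul_nonneg hK0nn (norm_nonneg w)
    rw [pi_norm_le_iff_of_nonneg hwnn]
    intro k
    have h1 : (Φ.mulVec w) k = ∑ j, Φ k j * w j := by
      simp [Matrix.mulVec, dotProduct]
    rw [h1]
    calc ‖∑ j, Φ k j * w j‖ ≤ ∑ j, ‖Φ k j * w j‖ := norm_sum_le _ _
      _ = ∑ j, Φ k j * ‖w j‖ := by
          refine Finset.sum_congr rfl fun j _ => ?_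
          rw [norm_mul, Real.norm_of_nonneg (hnn k j)]
      _ ≤ ∑ j, Φ k j * ‖w‖ := by
          refine Finset.sum_le_sum fun j _ => ?_
          exact mul_le_mul_of_nonneg_left (norm_le_pi_norm w j) (hnn k j)
      _ = (∑ j, Φ k j) * ‖w‖ := by rw [Finset.sum_mul]
      _ ≤ K0 * ‖w‖ := by
          exact mul_le_mul_of_nonneg_right (hle k) (norm_nonneg w)

/-- If `λ_k > 0` and `2 max_k λ_k + Σ_j λ_j < 2`, then every eigenvalue of
`Φ = diag((1−λ_k)² + λ_k²) + λ λᵀ` is strictly less than `1`, and the iteration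
`ν[n+1] = Φ ν[n] + J λ` converges to the unique fixed point `(I − Φ)⁻¹ (J λ)`
for any `J` and any initial condition `ν[0]`. -/
theorem stmt_11 {P : ℕ} (l : Fin P → ℝ) (hl : ∀ k, 0 < l k)
    (hstab : ∀ k, 2 * l k + ∑ j, l j < 2) :
    (∀ μ ∈ spectrum ℝ
        (Matrix.diagonal (fun k => (1 - l k) ^ 2 + (l k) ^ 2) + Matrix.vecMulVec l l),
      μ < 1) ∧
    (∀ (J : ℝ) (ν : ℕ → Fin P → ℝ),
      (∀ n, ν (n + 1)
          = (Matrix.diagonal (fun k => (1 - l k) ^ 2 + (l k) ^ 2)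
              + Matrix.vecMulVec l l).mulVec (ν n) + J • l) →
      Tendsto ν atTop
        (nhds ((1 - (Matrix.diagonal (fun k => (1 - l k) ^ 2 + (l k) ^ 2)
            + Matrix.vecMulVec l l))⁻¹.mulVec (J • l)))) := by
  obtain ⟨K0, hK0nn, hK0lt, hbound⟩ := stmt_11_aux l hl hstab
  set Φ := Matrix.diagonal (fun k => (1 - l k) ^ 2 + (l k) ^ 2) + Matrix.vecMulVec l l with hΦ
  -- every eigenvector equation forces |μ| ≤ K0
  have heig : ∀ (μ : ℝ) (v : Fin P → ℝ), v ≠ 0 → Φ.mulVec v = μ • v → |μ| ≤ K0 := by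
    intro μ v hv heq
    have hvpos : 0 < ‖v‖ := norm_pos_iff.mpr hv
    have := hbound v
    rw [heq, norm_smul, Real.norm_eq_abs] at this
    exact le_of_mul_le_mul_right this hvpos
  constructor
  · intro μ hμ
    rw [spectrum.mem_iff] at hμ
    by_contra hcon
    push_neg at hcon
    apply hμ
    rw [Matrix.isUnit_iff_isUnit_det, isUnit_iff_ne_zero]
    intro hdet
    obtain ⟨v, hv, hveq⟩ := (Matrix.exists_mulVec_eq_zero_iff).mpr hdet
    have h1 : Φ.mulVec v = μ • v := by
      have : (algebraMap ℝ (Matrix (Fin P) (Fin P) ℝ) μ) = μ • (1 : Matrix (Fin P) (Fin P) ℝ) := by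
        rw [Algebra.algebraMap_eq_smul_one]
      rw [this, Matrix.sub_mulVec, Matrix.smul_mulVec, Matrix.one_mulVec,
        sub_eq_zero] at hveq
      exact hveq.symm
    have := heig μ v hv h1
    have : μ ≤ |μ| := le_abs_self μ
    have habs := heig μ v hv h1
    linarith
  · intro J ν hrec
    -- the affine map is a contraction
    set f : (Fin P → ℝ) → (Fin P → ℝ) := fun v => Φ.mulVec v + J • l with hf
    set K : NNReal := K0.toNNReal with hK
    have hKlt : K < 1 := by
      rw [← NNReal.coe_lt_coe]
      simpa [hK, Real.coe_toNNReal _ hK0nn] using hK0lt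
    have hlip : LipschitzWith K f := by
      apply LipschitzWith.of_dist_le_mul
      intro x y
      have h1 : f x - f y = Φ.mulVec (x - y) := by
        simp [hf, Matrix.mulVec_sub]
      rw [dist_eq_norm, dist_eq_norm, h1]
      have := hbound (x - y)
      rwa [hK, Real.coe_toNNReal _ hK0nn]
    have hcw : ContractingWith K f := ⟨hKlt, hlip⟩
    -- ν n = f^[n] (ν 0)
    have hiter : ∀ n, ν n = f^[n] (ν 0) := by
      intro n
      induction n with
      | zero => simp
      | succ n ih =>
        rw [Function.iterate_succ_apply', ← ih, hrec n]
    -- fixed point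
    have htend : Tendsto ν atTop (nhds (ContractingWith.fixedPoint f hcw)) := by
      have := hcw.tendsto_iterate_fixedPoint (ν 0)
      refine this.congr fun n => (hiter n).symm
    -- identify the fixed point
    set x := ContractingWith.fixedPoint f hcw with hx
    have hfix : f x = x := hcw.fixedPoint_isFixedPt
    have hfix2 : (1 - Φ).mulVec x = J • l := by
      rw [Matrix.sub_mulVec, Matrix.one_mulVec]
      have h : Φ.mulVec x + J • l = x := hfix
      exact sub_eq_of_eq_add' h.symm
    have hdet : (1 - Φ).det ≠ 0 := by
      intro hdet
      obtain ⟨v, hv, hveq⟩ := (Matrix.exists_mulVec_eq_zero_iff).mpr hdet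
      rw [Matrix.sub_mulVec, Matrix.one_mulVec, sub_eq_zero] at hveq
      have h1 : Φ.mulVec v = (1 : ℝ) • v := by rw [one_smul]; exact hveq.symm
      have := heig 1 v hv h1
      rw [abs_one] at this
      linarith
    have hinv : (1 - Φ)⁻¹ * (1 - Φ) = 1 :=
      Matrix.nonsing_inv_mul _ (isUnit_iff_ne_zero.mpr hdet)
    have hxeq : (1 - Φ)⁻¹.mulVec (J • l) = x := by
      rw [← hfix2, Matrix.mulVec_mulVec, hinv, Matrix.one_mulVec]
    rw [hxeq]
    exact htend
end

section
/- If the steady state of the recursion ν_i[n+1] = ((1−λ_i)^2 + λ_i^2) ν_i[n] + λ_i (λ^T ν[n] + J_min) exists with all λ_i in (0,1) and S := (1/2) Σ_i λ_i/(1−λ_i) < 1, then the steady-state excess value J_ex = λ^T ν[∞] satisfies J_ex = J_min · S / (1 − S). -/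
open Finset

/-- Steady-state excess: if `ν[∞]` is a fixed point of
`ν_i = ((1−λ_i)² + λ_i²) ν_i + λ_i (J_ex + J_min)` with `J_ex = Σ_i λ_i ν_i`,
all `λ_i ∈ (0,1)`, `J_min > 0` and `S = (1/2) Σ_i λ_i/(1−λ_i) < 1`, then
`J_ex = J_min · S / (1 − S)`. -/
theorem stmt_14 {P : ℕ} (l : Fin P → ℝ) (ν : Fin P → ℝ) (Jmin : ℝ)
    (hl : ∀ i, 0 < l i ∧ l i < 1) (hJ : 0 < Jmin)
    (hfix : ∀ i, ν i = ((1 - l i) ^ 2 + (l i) ^ 2) * ν i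
        + l i * ((∑ j, l j * ν j) + Jmin))
    (hS : (1 / 2) * ∑ i, l i / (1 - l i) < 1) :
    ∑ i, l i * ν i
      = Jmin * ((1 / 2) * ∑ i, l i / (1 - l i)) / (1 - (1 / 2) * ∑ i, l i / (1 - l i)) := by
  set J : ℝ := ∑ j, l j * ν j with hJdef
  set S : ℝ := (1 / 2) * ∑ i, l i / (1 - l i) with hSdef
  have hkey : ∀ i, l i * ν i = (J + Jmin) * ((1 / 2) * (l i / (1 - l i))) := by
    intro i
    have h1 : (1 : ℝ) - l i ≠ 0 := by have := (hl i).2; linarith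
    have h0 : l i ≠ 0 := ne_of_gt (hl i).1
    have := hfix i
    field_simp at this ⊢
    have h2 : l i * (ν i * (1 - l i) * 2 - (J + Jmin)) = 0 := by linear_combination this
    have h3 := (mul_eq_zero.mp h2).resolve_left h0
    linarith
  have hJS : J = (J + Jmin) * S := by
    rw [hJdef]
    calc ∑ j, l j * ν j = ∑ j, (J + Jmin) * ((1 / 2) * (l j / (1 - l j))) := by
          exact Finset.sum_congr rfl fun j _ => hkey j
      _ = (J + Jmin) * S := by rw [hSdef, ← Finset.mul_sum]; congr 1; rw [Finset.mul_sum]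
  have hS1 : (1 : ℝ) - S ≠ 0 := by intro h; rw [hSdef] at h; linarith [hS]
  field_simp
  nlinarith [hJS]
end
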